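/- Let y₁,…,y_s be distinct real numbers, 0 ≤ m ≤ s−1, D^{2m} the matrix with entries (y_i − y_j)^{2m}, and P_k the (k+1)×s Vandermonde matrix (y_j^i)_{i=0,…,k; j=1,…,s}. Then for every a ∈ ker P_{m-1} and every b ∈ ker P_m, a^T D^{2m} b = 0. -/
import Mathlib


open Matrix

theorem micchelli_orthogonality (s : ℕ) (hs : 1 ≤ s) (y : Fin s → ℝ)
    (hy : Function.Injective y) (m : ℕ) (hm : m ≤ s - 1)
    (D2m : Matrix (Fin s) (Fin s) ℝ)
    (hD : ∀ i j, D2m i j = (y i - y j) ^ (2 * m))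
    (P : Matrix (Fin m) (Fin s) ℝ) (hP : ∀ (k : Fin m) (j : Fin s), P k j = y j ^ (k : ℕ))
    (P' : Matrix (Fin (m + 1)) (Fin s) ℝ)
    (hP' : ∀ (k : Fin (m + 1)) (j : Fin s), P' k j = y j ^ (k : ℕ))
    (a b : Fin s → ℝ) (ha : P.mulVec a = 0) (hb : P'.mulVec b = 0) :
    a ⬝ᵥ D2m.mulVec b = 0 := by
  have hA : ∀ k, k < m → ∑ j, a j * y j ^ k = 0 := by
    intro k hk
    have := congrFun ha ⟨k, hk⟩
    simpa [mulVec, dotProduct, hP, mul_comm] using this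
  have hB : ∀ k, k ≤ m → ∑ j, b j * y j ^ k = 0 := by
    intro k hk
    have := congrFun hb ⟨k, Nat.lt_succ_of_le hk⟩
    simpa [mulVec, dotProduct, hP', mul_comm] using this
  set T := ∑ k ∈ Finset.range (2 * m + 1), ∑ i, ∑ j,
      ((-1 : ℝ) ^ (k + 2 * m) * ((2 * m).choose k : ℝ)) *
        ((a i * y i ^ k) * (b j * y j ^ (2 * m - k))) with hT
  have expand : a ⬝ᵥ D2m.mulVec b = T := by
    rw [hT]
    have l1 : a ⬝ᵥ D2m.mulVec b = ∑ i, ∑ j, ∑ k ∈ Finset.range (2 * m + 1),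
        ((-1 : ℝ) ^ (k + 2 * m) * ((2 * m).choose k : ℝ)) *
          ((a i * y i ^ k) * (b j * y j ^ (2 * m - k))) := by
      simp only [dotProduct, mulVec]
      refine Finset.sum_congr rfl fun i _ => ?_
      rw [Finset.mul_sum]
      refine Finset.sum_congr rfl fun j _ => ?_
      rw [hD, sub_pow, Finset.sum_mul, Finset.mul_sum]
      refine Finset.sum_congr rfl fun k _ => ?_
      ring
    rw [l1]
    rw [show (∑ i : Fin s, ∑ j : Fin s, ∑ k ∈ Finset.range (2 * m + 1),
        ((-1 : ℝ) ^ (k + 2 * m) * ((2 * m).choose k : ℝ)) *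
          ((a i * y i ^ k) * (b j * y j ^ (2 * m - k)))) =
      ∑ i : Fin s, ∑ k ∈ Finset.range (2 * m + 1), ∑ j : Fin s,
        ((-1 : ℝ) ^ (k + 2 * m) * ((2 * m).choose k : ℝ)) *
          ((a i * y i ^ k) * (b j * y j ^ (2 * m - k))) from
      Finset.sum_congr rfl fun i _ => Finset.sum_comm]
    exact Finset.sum_comm
  have expand2 : T = ∑ k ∈ Finset.range (2 * m + 1),
      ((-1 : ℝ) ^ (k + 2 * m) * ((2 * m).choose k : ℝ)) *
        ((∑ i, a i * y i ^ k) * (∑ j, b j * y j ^ (2 * m - k))) := by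
    rw [hT]
    refine Finset.sum_congr rfl fun k _ => ?_
    rw [Finset.sum_mul_sum, Finset.mul_sum]
    refine Finset.sum_congr rfl fun i _ => ?_
    rw [Finset.mul_sum]
  rw [expand, expand2]
  apply Finset.sum_eq_zero
  intro k hk
  rw [Finset.mem_range] at hk
  rcases lt_or_ge k m with h | h
  · rw [hA k h]; ring
  · rw [hB (2 * m - k) (by omega)]; ring
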